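/- Let φ : ℝ → ℝ be convex, let U₀ : ℝ → ℝ, and for x ∈ ℝ define Ψ(x) as the supremum of the set of maximizers {y : U₀(y) - φ(y - x) = sup_z (U₀(z) - φ(z - x))}, assuming for each x the supremum of U₀(z) - φ(z - x) is attained and Ψ(x) is finite. Then Ψ is non-decreasing: for x₁ ≤ x₂ one has Ψ(x₁) ≤ Ψ(x₂). -/

import Mathlib

/-- The set of maximizers of `z ↦ U₀ z - φ (z - x)`. -/
def maximizerSet (U₀ φ : ℝ → ℝ) (x : ℝ) : Set ℝ :=
  {y | ∀ z, U₀ z - φ (z - x) ≤ U₀ y - φ (y - x)}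

/-- Four-point convexity inequality: if `p ≤ q ≤ s` and `q + r = p + s`,
then `φ q + φ r ≤ φ p + φ s`. -/
lemma conv_four (φ : ℝ → ℝ) (hφ : ConvexOn ℝ Set.univ φ)
    {p q r s : ℝ} (hpq : p ≤ q) (hqs : q ≤ s) (hsum : q + r = p + s) :
    φ q + φ r ≤ φ p + φ s := by
  rcases eq_or_lt_of_le (hpq.trans hqs) with h | h
  · have hq : q = p := le_antisymm (h ▸ hqs) hpq
    have hr : r = p := by linarith
    rw [hq, hr, h]
  · have hd : (0:ℝ) < s - p := by linarith
    have ha : 0 ≤ (s - q) / (s - p) := div_nonneg (by linarith) hd.le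
    have hb : 0 ≤ (q - p) / (s - p) := div_nonneg (by linarith) hd.le
    have hab : (s - q) / (s - p) + (q - p) / (s - p) = 1 := by
      field_simp; ring
    have hq := hφ.2 (Set.mem_univ p) (Set.mem_univ s) ha hb hab
    have hr := hφ.2 (Set.mem_univ p) (Set.mem_univ s) hb ha (by linarith)
    have e1 : ((s - q) / (s - p)) • p + ((q - p) / (s - p)) • s = q := by
      simp only [smul_eq_mul]; field_simp; ring
    have e2 : ((q - p) / (s - p)) • p + ((s - q) / (s - p)) • s = r := by
      simp only [smul_eq_mul]; field_simp; nlinarith [hsum]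
    rw [e1] at hq
    rw [e2] at hr
    simp only [smul_eq_mul] at hq hr
    have key : (s - q) / (s - p) * φ p + (q - p) / (s - p) * φ s +
        ((q - p) / (s - p) * φ p + (s - q) / (s - p) * φ s) = φ p + φ s := by
      have h1 : (s - q) / (s - p) = 1 - (q - p) / (s - p) := by linarith
      rw [h1]; ring
    linarith

/-- the rightmost-maximizer process `Ψ` is non-decreasing. -/
theorem psi_monotone (φ U₀ Ψ : ℝ → ℝ)
    (hφ : ConvexOn ℝ Set.univ φ)
    (hmem : ∀ x, Ψ x ∈ maximizerSet U₀ φ x)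
    (hsup : ∀ x, IsLUB (maximizerSet U₀ φ x) (Ψ x)) :
    ∀ x₁ x₂ : ℝ, x₁ ≤ x₂ → Ψ x₁ ≤ Ψ x₂ := by
  intro x₁ x₂ hx
  by_contra hcon
  push_neg at hcon
  -- notation: y = Ψ x₂ < b = Ψ x₁
  have hyb : Ψ x₂ < Ψ x₁ := hcon
  have h2 : U₀ (Ψ x₂) - φ (Ψ x₂ - x₁) ≤ U₀ (Ψ x₁) - φ (Ψ x₁ - x₁) := hmem x₁ (Ψ x₂)
  have hc : φ (Ψ x₂ - x₁) + φ (Ψ x₁ - x₂) ≤ φ (Ψ x₂ - x₂) + φ (Ψ x₁ - x₁) :=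
    conv_four φ hφ (by linarith) (by linarith) (by ring)
  have hbmem : Ψ x₁ ∈ maximizerSet U₀ φ x₂ := by
    intro z
    have hz : U₀ z - φ (z - x₂) ≤ U₀ (Ψ x₂) - φ (Ψ x₂ - x₂) := hmem x₂ z
    linarith
  have := (hsup x₂).1 hbmem
  linarith
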